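/- Let a_j = Σ_{t=0}^{j-1} (j-t)(2n)^{n-t} for 1 ≤ j ≤ n, and for 1 ≤ k ≤ n-1 let D_k = {a_{j+k} - a_j : 1 ≤ j ≤ n-k}. If S ⊆ A - A is convex, then |S ∩ D_k| ≤ 2 for every k with 1 ≤ k ≤ n-1. -/
import Mathlib


open Pointwise

private lemma geom_aux (c : ℝ) (hc : 2 ≤ c) (m : ℕ) :
    ∑ e ∈ Finset.range m, c ^ (e + 1) ≤ 2 * c ^ m - 2 := by
  induction m with
  | zero => norm_num
  | succ m ih =>
      rw [Finset.sum_range_succ]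
      have h0 : (0:ℝ) ≤ c := by linarith
      have h1 : (0:ℝ) ≤ c ^ m := pow_nonneg h0 m
      have h2 : c ^ (m+1) = c * c ^ m := by ring
      nlinarith

private lemma geom_tail (c : ℝ) (hc : 2 ≤ c) (n b : ℕ) (hb : b ≤ n) :
    ∑ t ∈ Finset.Ico b n, c ^ (n - t) ≤ 2 * c ^ (n - b) - 2 := by
  rw [Finset.sum_Ico_eq_sum_range]
  have h1 : ∀ e ∈ Finset.range (n - b), c ^ (n - (b + e)) = (fun e => c ^ (e+1)) (n - b - 1 - e) := by
    intro e he
    rw [Finset.mem_range] at he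
    simp only []
    congr 1
    omega
  rw [Finset.sum_congr rfl h1, Finset.sum_range_reflect (fun e => c ^ (e+1)) (n-b)]
  exact geom_aux c hc (n-b)

/-- A finite set `S = {s_1 < ... < s_m} ⊂ ℝ` is convex if its consecutive differences
are strictly increasing. -/
def ConvexFinset (S : Finset ℝ) : Prop :=
  ∀ i : ℕ, ∀ h : i + 2 < S.card,
    (S.orderIsoOfFin rfl ⟨i + 2, h⟩ : ℝ) - (S.orderIsoOfFin rfl ⟨i + 1, by omega⟩ : ℝ) >
    (S.orderIsoOfFin rfl ⟨i + 1, by omega⟩ : ℝ) - (S.orderIsoOfFin rfl ⟨i, by omega⟩ : ℝ)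

/-- with `a_j = Σ_{t=0}^{j-1} (j-t)(2n)^{n-t}`, `A = {a_1, ..., a_n}` and
`D_k = {a_{j+k} - a_j : 1 ≤ j ≤ n-k}`, if `S ⊆ A - A` is convex then `|S ∩ D_k| ≤ 2`
for every `1 ≤ k ≤ n-1`. -/
theorem statement12 (n : ℕ) (hn : 1 ≤ n) (a : ℕ → ℝ)
    (ha : ∀ j, a j = ∑ t ∈ Finset.range j, ((j - t : ℕ) : ℝ) * (2 * (n : ℝ)) ^ (n - t))
    (A : Finset ℝ) (hA : A = (Finset.Icc 1 n).image a)
    (D : ℕ → Finset ℝ)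
    (hD : ∀ k, D k = (Finset.Icc 1 (n - k)).image (fun j => a (j + k) - a j))
    (S : Finset ℝ) (hS : S ⊆ A - A) (hSconv : ConvexFinset S) :
    ∀ k, 1 ≤ k → k ≤ n - 1 → (S ∩ D k).card ≤ 2 := by
  intro k hk1 hkn
  have hn2 : 2 ≤ n := by omega
  obtain ⟨c, hcdef⟩ : ∃ c : ℝ, c = 2 * (n:ℝ) := ⟨_, rfl⟩
  rw [← hcdef] at ha
  have hnR : (1:ℝ) ≤ (n:ℝ) := by exact_mod_cast hn
  have hceq : c = 2 * (n:ℝ) := hcdef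
  have hc2 : (2:ℝ) ≤ c := by rw [hcdef]; linarith
  have hc0 : (0:ℝ) ≤ c := by linarith
  have hc1 : (1:ℝ) ≤ c := by linarith
  have key : ∀ p, p ≤ n → a p = ∑ t ∈ Finset.range n, ((p - t : ℕ) : ℝ) * c ^ (n - t) := by
    intro p hp
    rw [ha p]
    apply Finset.sum_subset (Finset.range_subset_range.2 hp)
    intro t _ hnt
    rw [Finset.mem_range, not_lt] at hnt
    have h0 : p - t = 0 := by omega
    rw [h0]
    norm_num
  have diff : ∀ p q, p ≤ n → q ≤ n →
      a q - a p = ∑ t ∈ Finset.range n, (((q - t : ℕ) : ℝ) - ((p - t : ℕ) : ℝ)) * c ^ (n - t) := by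
    intro p q hp hq
    rw [key q hq, key p hp, ← Finset.sum_sub_distrib]
    exact Finset.sum_congr rfl fun t _ => by ring
  have B1 : ∀ i j : ℕ, j < i → i ≤ n →
      ((i - j : ℕ) : ℝ) * c ^ n ≤ a i - a j ∧ a i - a j < ((i - j : ℕ) : ℝ) * c ^ n + c ^ n := by
    intro i j hji hin
    rw [diff j i (by omega) hin]
    rw [Finset.range_eq_Ico, Finset.sum_eq_sum_Ico_succ_bot (by omega : 0 < n)]
    have e0 : (((i - 0 : ℕ) : ℝ) - ((j - 0 : ℕ) : ℝ)) * c ^ (n - 0) = ((i - j : ℕ) : ℝ) * c ^ n := by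
      rw [Nat.sub_zero, Nat.sub_zero, Nat.sub_zero, Nat.cast_sub hji.le]
    rw [e0]
    have tnn : ∀ t ∈ Finset.Ico 1 n, (0:ℝ) ≤ (((i - t : ℕ) : ℝ) - ((j - t : ℕ) : ℝ)) * c ^ (n - t) := by
      intro t _
      apply mul_nonneg _ (pow_nonneg hc0 _)
      have h1 : (j - t : ℕ) ≤ (i - t : ℕ) := by omega
      have h2 := (Nat.cast_le (α := ℝ)).2 h1
      linarith
    constructor
    · have := Finset.sum_nonneg tnn
      linarith
    · have tub : ∀ t ∈ Finset.Ico 1 n, (((i - t : ℕ) : ℝ) - ((j - t : ℕ) : ℝ)) * c ^ (n - t)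
          ≤ ((i - j : ℕ) : ℝ) * c ^ (n - t) := by
        intro t _
        apply mul_le_mul_of_nonneg_right _ (pow_nonneg hc0 _)
        have h1 : (i - t : ℕ) ≤ (i - j) + (j - t) := by omega
        have h2 : ((i - t : ℕ):ℝ) ≤ ((i - j : ℕ):ℝ) + ((j - t : ℕ):ℝ) := by exact_mod_cast h1
        linarith
      have hsum := Finset.sum_le_sum tub
      rw [← Finset.mul_sum] at hsum
      have hg := geom_tail c hc2 n 1 (by omega)
      have hK1 : (1:ℝ) ≤ ((i - j : ℕ):ℝ) := by exact_mod_cast Nat.one_le_iff_ne_zero.2 (by omega)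
      have hKn : ((i - j : ℕ):ℝ) ≤ (n:ℝ) := by exact_mod_cast (by omega : i - j ≤ n)
      have hX1 : (1:ℝ) ≤ c ^ (n-1) := one_le_pow₀ hc1
      have hcn : c ^ n = c ^ (n-1) * c := by
        rw [← pow_succ]; congr 1; omega
      have hKnn : ((i - j : ℕ):ℝ) * (2 * c ^ (n-1) - 2) ≤ (n:ℝ) * (2 * c ^ (n-1) - 2) := by
        apply mul_le_mul_of_nonneg_right hKn; linarith
      have hmul : ((i - j : ℕ):ℝ) * (∑ t ∈ Finset.Ico 1 n, c ^ (n - t))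
          ≤ ((i - j : ℕ):ℝ) * (2 * c ^ (n-1) - 2) := by
        apply mul_le_mul_of_nonneg_left hg; linarith
      simp only [zero_add]
      rw [hcn]
      nlinarith [mul_nonneg (sub_nonneg.2 hKn) (le_trans zero_le_one hX1), hsum.trans hmul]
  have B2 : ∀ j1 j2, 1 ≤ j1 → j1 < j2 → j2 + k ≤ n →
      c ^ (n - j2) ≤ (a (j2+k) - a j2) - (a (j1+k) - a j1) := by
    intro j1 j2 hj1 hlt hj2k
    have hrep : (a (j2+k) - a j2) - (a (j1+k) - a j1)
        = ∑ t ∈ Finset.range n,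
          ((((j2+k-t:ℕ):ℝ) - ((j1+k-t:ℕ):ℝ)) - (((j2-t:ℕ):ℝ) - ((j1-t:ℕ):ℝ))) * c^(n-t) := by
      have h0 : (a (j2+k) - a j2) - (a (j1+k) - a j1)
          = (a (j2+k) - a (j1+k)) - (a j2 - a j1) := by ring
      rw [h0, diff (j1+k) (j2+k) (by omega) (by omega), diff j1 j2 (by omega) (by omega),
        ← Finset.sum_sub_distrib]
      exact Finset.sum_congr rfl fun t _ => by ring
    rw [hrep]
    have tnn : ∀ t ∈ Finset.range n,
        (0:ℝ) ≤ ((((j2+k-t:ℕ):ℝ) - ((j1+k-t:ℕ):ℝ)) - (((j2-t:ℕ):ℝ) - ((j1-t:ℕ):ℝ))) * c^(n-t) := by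
      intro t _
      apply mul_nonneg _ (pow_nonneg hc0 _)
      have h1 : (j1+k-t) + (j2-t) ≤ (j2+k-t) + (j1-t) := by omega
      have h2 : ((j1+k-t:ℕ):ℝ) + ((j2-t:ℕ):ℝ) ≤ ((j2+k-t:ℕ):ℝ) + ((j1-t:ℕ):ℝ) := by
        exact_mod_cast h1
      linarith
    have hmem : j1 + 1 ∈ Finset.range n := by
      rw [Finset.mem_range]; omega
    have hval : ((((j2+k-(j1+1):ℕ):ℝ) - ((j1+k-(j1+1):ℕ):ℝ))
        - (((j2-(j1+1):ℕ):ℝ) - ((j1-(j1+1):ℕ):ℝ))) * c^(n-(j1+1)) = c^(n-(j1+1)) := by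
      have e1 : j2 + k - (j1+1) = (j2 - j1 - 1) + k := by omega
      have e2 : j1 + k - (j1+1) = k - 1 := by omega
      have e3 : j2 - (j1+1) = j2 - j1 - 1 := by omega
      have e4 : j1 - (j1+1) = 0 := by omega
      rw [e1, e2, e3, e4, Nat.cast_add, Nat.cast_sub hk1]
      push_cast
      ring
    have hs := Finset.single_le_sum tnn hmem
    rw [hval] at hs
    have hle : c ^ (n - j2) ≤ c ^ (n - (j1+1)) := pow_le_pow_right₀ hc1 (by omega)
    linarith
  have B3 : ∀ j2 j3, 1 ≤ j2 → j2 < j3 → j3 + k ≤ n →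
      (a (j3+k) - a j3) - (a (j2+k) - a j2) < c ^ (n - j2) := by
    intro j2 j3 hj2 hlt hj3k
    have hrep : (a (j3+k) - a j3) - (a (j2+k) - a j2)
        = ∑ t ∈ Finset.range n,
          ((((j3+k-t:ℕ):ℝ) - ((j2+k-t:ℕ):ℝ)) - (((j3-t:ℕ):ℝ) - ((j2-t:ℕ):ℝ))) * c^(n-t) := by
      have h0 : (a (j3+k) - a j3) - (a (j2+k) - a j2)
          = (a (j3+k) - a (j2+k)) - (a j3 - a j2) := by ring
      rw [h0, diff (j2+k) (j3+k) (by omega) (by omega), diff j2 j3 (by omega) (by omega),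
        ← Finset.sum_sub_distrib]
      exact Finset.sum_congr rfl fun t _ => by ring
    rw [hrep, Finset.range_eq_Ico,
      ← Finset.sum_Ico_consecutive _ (Nat.zero_le (j2+1)) (by omega : j2+1 ≤ n)]
    have hz : ∑ t ∈ Finset.Ico 0 (j2+1),
        ((((j3+k-t:ℕ):ℝ) - ((j2+k-t:ℕ):ℝ)) - (((j3-t:ℕ):ℝ) - ((j2-t:ℕ):ℝ))) * c^(n-t) = 0 := by
      apply Finset.sum_eq_zero
      intro t ht
      rw [Finset.mem_Ico] at ht
      have h1 : t ≤ j2 := by omega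
      rw [Nat.cast_sub (by omega : t ≤ j3 + k), Nat.cast_sub (by omega : t ≤ j2 + k),
        Nat.cast_sub (by omega : t ≤ j3), Nat.cast_sub (by omega : t ≤ j2)]
      push_cast
      ring
    rw [hz, zero_add]
    have tub : ∀ t ∈ Finset.Ico (j2+1) n,
        ((((j3+k-t:ℕ):ℝ) - ((j2+k-t:ℕ):ℝ)) - (((j3-t:ℕ):ℝ) - ((j2-t:ℕ):ℝ))) * c^(n-t)
        ≤ (n:ℝ) * c^(n-t) := by
      intro t _
      apply mul_le_mul_of_nonneg_right _ (pow_nonneg hc0 _)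
      have h1 : (j3+k-t) + (j2-t) ≤ (j2+k-t) + (j3-t) + n := by omega
      have h2 : ((j3+k-t:ℕ):ℝ) + ((j2-t:ℕ):ℝ) ≤ ((j2+k-t:ℕ):ℝ) + ((j3-t:ℕ):ℝ) + (n:ℕ) := by
        exact_mod_cast h1
      push_cast at h2
      linarith
    have hsum := Finset.sum_le_sum tub
    rw [← Finset.mul_sum] at hsum
    have hg := geom_tail c hc2 n (j2+1) (by omega)
    have hmul : (n:ℝ) * (∑ t ∈ Finset.Ico (j2+1) n, c ^ (n - t)) ≤ (n:ℝ) * (2 * c ^ (n-(j2+1)) - 2) := by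
      apply mul_le_mul_of_nonneg_left hg; linarith
    have hX0 : (0:ℝ) < c ^ (n-(j2+1)) := pow_pos (by linarith) _
    have hcn : c ^ (n - j2) = c ^ (n-(j2+1)) * c := by
      rw [← pow_succ]; congr 1; omega
    have hfin : (n:ℝ) * (2 * c ^ (n-(j2+1)) - 2) < c ^ (n-(j2+1)) * c := by
      rw [hceq]; nlinarith
    rw [hcn]
    calc (∑ t ∈ Finset.Ico (j2+1) n,
        ((((j3+k-t:ℕ):ℝ) - ((j2+k-t:ℕ):ℝ)) - (((j3-t:ℕ):ℝ) - ((j2-t:ℕ):ℝ))) * c^(n-t))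
        ≤ (n:ℝ) * ∑ t ∈ Finset.Ico (j2+1) n, c ^ (n - t) := hsum
      _ ≤ (n:ℝ) * (2 * c ^ (n-(j2+1)) - 2) := hmul
      _ < c ^ (n-(j2+1)) * c := hfin
  by_contra hcon
  push_neg at hcon
  set T := S ∩ D k with hT
  have hne : T.Nonempty := Finset.card_pos.1 (by omega)
  set x := T.min' hne with hx
  have hxT : x ∈ T := Finset.min'_mem _ _
  have hne1 : (T.erase x).Nonempty := by
    rw [← Finset.card_pos, Finset.card_erase_of_mem hxT]; omega
  set y := (T.erase x).min' hne1 with hy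
  have hyT' : y ∈ T.erase x := Finset.min'_mem _ _
  have hyT : y ∈ T := Finset.mem_of_mem_erase hyT'
  have hxy : x < y :=
    lt_of_le_of_ne (Finset.min'_le _ _ hyT) (Ne.symm (Finset.ne_of_mem_erase hyT'))
  have hne2 : ((T.erase x).erase y).Nonempty := by
    rw [← Finset.card_pos, Finset.card_erase_of_mem hyT', Finset.card_erase_of_mem hxT]; omega
  set z := ((T.erase x).erase y).min' hne2 with hz
  have hzT'' : z ∈ (T.erase x).erase y := Finset.min'_mem _ _
  have hzT : z ∈ T := Finset.mem_of_mem_erase (Finset.mem_of_mem_erase hzT'')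
  have hyz : y < z :=
    lt_of_le_of_ne (Finset.min'_le _ _ (Finset.mem_of_mem_erase hzT''))
      (Ne.symm (Finset.ne_of_mem_erase hzT''))
  have hTbet : ∀ w ∈ T, w < z → w = x ∨ w = y := by
    intro w hw hwz
    by_contra hcontra
    push_neg at hcontra
    have hw2 : w ∈ (T.erase x).erase y :=
      Finset.mem_erase.2 ⟨hcontra.2, Finset.mem_erase.2 ⟨hcontra.1, hw⟩⟩
    exact absurd (Finset.min'_le _ _ hw2) (not_le.2 hwz)
  -- extract memberships
  have hxS : x ∈ S := (Finset.mem_inter.1 hxT).1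
  have hyS : y ∈ S := (Finset.mem_inter.1 hyT).1
  have hzS : z ∈ S := (Finset.mem_inter.1 hzT).1
  have hxD : x ∈ D k := (Finset.mem_inter.1 hxT).2
  have hyD : y ∈ D k := (Finset.mem_inter.1 hyT).2
  have hzD : z ∈ D k := (Finset.mem_inter.1 hzT).2
  rw [hD k, Finset.mem_image] at hxD hyD hzD
  obtain ⟨j1, hj1m, hj1e⟩ := hxD
  obtain ⟨j2, hj2m, hj2e⟩ := hyD
  obtain ⟨j3, hj3m, hj3e⟩ := hzD
  rw [Finset.mem_Icc] at hj1m hj2m hj3m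
  have hcnpos : (0:ℝ) < c ^ n := pow_pos (by linarith) n
  -- bounds for elements of D k'
  have hDlow : ∀ (k' j : ℕ), 1 ≤ k' → 1 ≤ j → j + k' ≤ n → ((k':ℕ):ℝ) * c ^ n ≤ a (j + k') - a j := by
    intro k' j h1 h2 h3
    have hb := (B1 (j + k') j (by omega) (by omega)).1
    have he : j + k' - j = k' := by omega
    rwa [he] at hb
  have hDhigh : ∀ (k' j : ℕ), 1 ≤ k' → 1 ≤ j → j + k' ≤ n →
      a (j + k') - a j < ((k':ℕ):ℝ) * c ^ n + c ^ n := by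
    intro k' j h1 h2 h3
    have hb := (B1 (j + k') j (by omega) (by omega)).2
    have he : j + k' - j = k' := by omega
    rwa [he] at hb
  have hj1n : j1 + k ≤ n := by omega
  have hj2n : j2 + k ≤ n := by omega
  have hj3n : j3 + k ≤ n := by omega
  have hxlow : ((k:ℕ):ℝ) * c ^ n ≤ x := by rw [← hj1e]; exact hDlow k j1 hk1 hj1m.1 hj1n
  have hzhigh : z < ((k:ℕ):ℝ) * c ^ n + c ^ n := by rw [← hj3e]; exact hDhigh k j3 hk1 hj3m.1 hj3n
  -- cluster separation
  have hclust : ∀ s ∈ S, x < s → s < z → s ∈ D k := by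
    intro s hsS hxs hsz
    have hsAA := hS hsS
    rw [Finset.mem_sub] at hsAA
    obtain ⟨u, huA, v, hvA, huv⟩ := hsAA
    rw [hA, Finset.mem_image] at huA hvA
    obtain ⟨i, him, hie⟩ := huA
    obtain ⟨jj, hjm, hje⟩ := hvA
    rw [Finset.mem_Icc] at him hjm
    have hkR : (1:ℝ) ≤ ((k:ℕ):ℝ) := by exact_mod_cast hk1
    have hxpos : (0:ℝ) < x := by
      have := mul_le_mul_of_nonneg_right hkR hcnpos.le
      rw [one_mul] at this
      linarith
    have hspos : (0:ℝ) < s := lt_trans hxpos hxs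
    have hij : jj < i := by
      by_contra hcon2
      push_neg at hcon2
      rcases eq_or_lt_of_le hcon2 with h | h
      · rw [← huv, ← hie, ← hje, h] at hspos; simp at hspos
      · have hb := (B1 jj i h hjm.2).1
        have h1 : (1:ℝ) ≤ ((jj - i : ℕ):ℝ) := by exact_mod_cast Nat.one_le_iff_ne_zero.2 (by omega)
        have hseq0 : s = a i - a jj := by rw [← huv, ← hie, ← hje]
        have h2 := mul_le_mul_of_nonneg_right h1 hcnpos.le
        rw [one_mul] at h2
        linarith
    have hseq : s = a i - a jj := by rw [← huv, ← hie, ← hje]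
    have hb := B1 i jj hij him.2
    rcases lt_trichotomy (i - jj) k with h | h | h
    · exfalso
      have h1 : ((i - jj : ℕ):ℝ) + 1 ≤ ((k:ℕ):ℝ) := by exact_mod_cast h
      have h2 := mul_le_mul_of_nonneg_right h1 hcnpos.le
      have hb2 := hb.2
      rw [add_mul, one_mul] at h2
      linarith
    · rw [hD k, Finset.mem_image]
      refine ⟨jj, Finset.mem_Icc.2 ⟨hjm.1, by omega⟩, ?_⟩
      have : jj + k = i := by omega
      rw [this, ← hseq]
    · exfalso
      have h1 : ((k:ℕ):ℝ) + 1 ≤ ((i - jj : ℕ):ℝ) := by exact_mod_cast h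
      have h2 := mul_le_mul_of_nonneg_right h1 hcnpos.le
      have hb1 := hb.1
      rw [add_mul, one_mul] at h2
      linarith
  have hbet : ∀ s ∈ S, x < s → s < z → s = y := by
    intro s hsS hxs hsz
    have hsT : s ∈ T := Finset.mem_inter.2 ⟨hsS, hclust s hsS hxs hsz⟩
    rcases hTbet s hsT hsz with h | h
    · exact absurd h (by intro he; rw [he] at hxs; exact lt_irrefl _ hxs)
    · exact h
  -- order iso part
  set e := S.orderIsoOfFin rfl with he
  set ix : Fin S.card := e.symm ⟨x, hxS⟩ with hix
  have hex : e ix = ⟨x, hxS⟩ := e.apply_symm_apply _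
  have hlt1 : ix < e.symm ⟨y, hyS⟩ := e.symm.lt_iff_lt.2 (Subtype.mk_lt_mk.2 hxy)
  have hvy : (ix:ℕ) < ((e.symm ⟨y, hyS⟩ : Fin S.card):ℕ) := Fin.lt_def.1 hlt1
  have hcard1 : (ix:ℕ) + 1 < S.card := by
    have := (e.symm ⟨y, hyS⟩).isLt
    omega
  have h1 : e ⟨(ix:ℕ) + 1, hcard1⟩ = ⟨y, hyS⟩ := by
    set w := e ⟨(ix:ℕ) + 1, hcard1⟩ with hw
    have hxw : x < (w:ℝ) := by
      have hltf : ix < (⟨(ix:ℕ) + 1, hcard1⟩ : Fin S.card) := Fin.lt_def.2 (Nat.lt_succ_self _)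
      have h2 := e.lt_iff_lt.2 hltf
      rw [hex] at h2
      exact h2
    have hwy : (w:ℝ) ≤ y := by
      have hle : (⟨(ix:ℕ) + 1, hcard1⟩ : Fin S.card) ≤ e.symm ⟨y, hyS⟩ := Fin.le_def.2 hvy
      have h2 := e.le_iff_le.2 hle
      rw [e.apply_symm_apply] at h2
      exact h2
    rcases eq_or_lt_of_le hwy with h | h
    · exact Subtype.ext h
    · exact Subtype.ext (hbet (w:ℝ) w.2 hxw (lt_trans h hyz))
  have hiy : e.symm ⟨y, hyS⟩ = ⟨(ix:ℕ) + 1, hcard1⟩ := by rw [← h1, e.symm_apply_apply]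
  have hlt2 : e.symm ⟨y, hyS⟩ < e.symm ⟨z, hzS⟩ := e.symm.lt_iff_lt.2 (Subtype.mk_lt_mk.2 hyz)
  have hvz : (ix:ℕ) + 1 < ((e.symm ⟨z, hzS⟩ : Fin S.card):ℕ) := by
    rw [hiy] at hlt2
    exact Fin.lt_def.1 hlt2
  have hcard2 : (ix:ℕ) + 2 < S.card := by
    have := (e.symm ⟨z, hzS⟩).isLt
    omega
  have h2 : e ⟨(ix:ℕ) + 2, hcard2⟩ = ⟨z, hzS⟩ := by
    set w := e ⟨(ix:ℕ) + 2, hcard2⟩ with hw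
    have hyw : y < (w:ℝ) := by
      have hltf : (⟨(ix:ℕ) + 1, hcard1⟩ : Fin S.card) < (⟨(ix:ℕ) + 2, hcard2⟩ : Fin S.card) :=
        Fin.mk_lt_mk.2 (by omega)
      have h3 := e.lt_iff_lt.2 hltf
      rw [h1] at h3
      exact h3
    have hwz : (w:ℝ) ≤ z := by
      have hle : (⟨(ix:ℕ) + 2, hcard2⟩ : Fin S.card) ≤ e.symm ⟨z, hzS⟩ := Fin.le_def.2 hvz
      have h3 := e.le_iff_le.2 hle
      rw [e.apply_symm_apply] at h3
      exact h3
    rcases eq_or_lt_of_le hwz with h | h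
    · exact Subtype.ext h
    · exfalso
      have h4 := hbet (w:ℝ) w.2 (lt_trans hxy hyw) h
      rw [h4] at hyw
      exact lt_irrefl _ hyw
  have hgt' : z - y > y - x := by
    have hgt := hSconv (ix:ℕ) hcard2
    rw [← he] at hgt
    have e1 : ((e ⟨(ix:ℕ) + 2, hcard2⟩ : {r // r ∈ S}) : ℝ) = z := congrArg Subtype.val h2
    have e2 : ((e ⟨(ix:ℕ) + 1, hcard1⟩ : {r // r ∈ S}) : ℝ) = y := congrArg Subtype.val h1
    have e3 : ((e ix : {r // r ∈ S}) : ℝ) = x := congrArg Subtype.val hex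
    rw [e1, e2, e3] at hgt
    exact hgt
  -- hgt : z - y > y - x
  have hj12 : j1 < j2 := by
    by_contra hcon3
    push_neg at hcon3
    rcases eq_or_lt_of_le hcon3 with h | h
    · rw [← hj1e, ← hj2e, h] at hxy; exact lt_irrefl _ hxy
    · have hb := B2 j2 j1 hj2m.1 h hj1n
      have := pow_pos (lt_of_lt_of_le zero_lt_two hc2) (n - j1)
      rw [← hj1e, ← hj2e] at hxy
      linarith
  have hj23 : j2 < j3 := by
    by_contra hcon3
    push_neg at hcon3
    rcases eq_or_lt_of_le hcon3 with h | h
    · rw [← hj2e, ← hj3e, h] at hyz; exact lt_irrefl _ hyz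
    · have hb := B2 j3 j2 hj3m.1 h hj2n
      have := pow_pos (lt_of_lt_of_le zero_lt_two hc2) (n - j2)
      rw [← hj2e, ← hj3e] at hyz
      linarith
  have hB2 := B2 j1 j2 hj1m.1 hj12 hj2n
  have hB3 := B3 j2 j3 hj2m.1 hj23 hj3n
  rw [hj1e, hj2e] at hB2
  rw [hj2e, hj3e] at hB3
  linarith [hgt']
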